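/- Let M be a 3×3 real matrix of rank 3 with positive entries whose cross-ratio group is dense in ℝ>0. Then M has two 2×2 submatrices that are not contained in the same two rows nor in the same two columns, and whose cross-ratios generate a dense subgroup of ℝ>0. -/
import Mathlib

set_option maxHeartbeats 1000000


/-- The cross-ratio of the 2×2 submatrix of `M` with rows `i₁,i₂` and columns `j₁,j₂`. -/
noncomputable def crr3 (M : Matrix (Fin 3) (Fin 3) ℝ) (i₁ i₂ j₁ j₂ : Fin 3) : ℝ :=
  (M i₁ j₁ * M i₂ j₂) / (M i₁ j₂ * M i₂ j₁)

/-- The cross-ratio group of `M`: the subgroup of ℝ>0 generated by all cross-ratios of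
2×2 submatrices. -/
noncomputable def CRG (M : Matrix (Fin 3) (Fin 3) ℝ) : Subgroup {x : ℝ // 0 < x} :=
  Subgroup.closure {x | ∃ i₁ i₂ j₁ j₂ : Fin 3, i₁ ≠ i₂ ∧ j₁ ≠ j₂ ∧ (x : ℝ) = crr3 M i₁ i₂ j₁ j₂}

namespace CRGAux

local notation "P" => {x : ℝ // 0 < x}

/-- logarithm map on positive reals. -/
noncomputable def logP (x : P) : ℝ := Real.log x.1

lemma logP_def (x : P) : logP x = Real.log x.1 := rfl

/-- log as a homeomorphism from positive reals to ℝ. -/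
noncomputable def logHomeo : P ≃ₜ ℝ where
  toFun := logP
  invFun y := ⟨Real.exp y, Real.exp_pos y⟩
  left_inv x := Subtype.ext (Real.exp_log x.2)
  right_inv y := Real.log_exp y
  continuous_toFun := by
    rw [continuous_iff_continuousAt]
    intro x
    exact (Real.continuousAt_log x.2.ne').comp continuous_subtype_val.continuousAt
  continuous_invFun := Real.continuous_exp.subtype_mk _

/-- Pullback of an additive subgroup of ℝ to a subgroup of positive reals. -/
noncomputable def pullS (S : AddSubgroup ℝ) : Subgroup P where
  carrier := {x : P | Real.log x.1 ∈ S}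
  one_mem' := by
    simp only [Set.mem_setOf_eq, Positive.val_one, Real.log_one]
    exact S.zero_mem
  mul_mem' := by
    intro x y hx hy
    simp only [Set.mem_setOf_eq, Positive.val_mul] at *
    rw [Real.log_mul x.2.ne' y.2.ne']
    exact S.add_mem hx hy
  inv_mem' := by
    intro x hx
    simp only [Set.mem_setOf_eq, Positive.coe_inv] at *
    rw [Real.log_inv]
    exact S.neg_mem hx

/-- Pushforward (via exp) of a subgroup of positive reals to an additive subgroup of ℝ. -/
noncomputable def pushS (T : Subgroup P) : AddSubgroup ℝ where
  carrier := {y : ℝ | (⟨Real.exp y, Real.exp_pos y⟩ : P) ∈ T}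
  zero_mem' := by
    have h : (⟨Real.exp 0, Real.exp_pos 0⟩ : P) = 1 := Subtype.ext (by simp [Real.exp_zero])
    simp only [Set.mem_setOf_eq, h]
    exact T.one_mem
  add_mem' := by
    intro x y hx hy
    have h : (⟨Real.exp (x + y), Real.exp_pos _⟩ : P)
        = (⟨Real.exp x, Real.exp_pos x⟩ : P) * ⟨Real.exp y, Real.exp_pos y⟩ :=
      Subtype.ext (by simp [Real.exp_add, Positive.val_mul])
    simp only [Set.mem_setOf_eq] at *
    rw [h]
    exact T.mul_mem hx hy
  neg_mem' := by
    intro x hx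
    have h : (⟨Real.exp (-x), Real.exp_pos _⟩ : P)
        = (⟨Real.exp x, Real.exp_pos x⟩ : P)⁻¹ :=
      Subtype.ext (by simp [Real.exp_neg])
    simp only [Set.mem_setOf_eq] at *
    rw [h]
    exact T.inv_mem hx

lemma logP_image_closure (s : Set P) :
    logP '' ((Subgroup.closure s : Subgroup P) : Set P)
      = ((AddSubgroup.closure (logP '' s) : AddSubgroup ℝ) : Set ℝ) := by
  apply subset_antisymm
  · rintro _ ⟨x, hx, rfl⟩
    have h1 : Subgroup.closure s ≤ pullS (AddSubgroup.closure (logP '' s)) :=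
      (Subgroup.closure_le _).2 (fun y hy => AddSubgroup.subset_closure ⟨y, hy, rfl⟩)
    exact h1 hx
  · intro y hy
    have h2 : AddSubgroup.closure (logP '' s) ≤ pushS (Subgroup.closure s) := by
      apply (AddSubgroup.closure_le _).2
      rintro _ ⟨x, hx, rfl⟩
      show (⟨Real.exp (logP x), _⟩ : P) ∈ Subgroup.closure s
      have h : (⟨Real.exp (logP x), Real.exp_pos _⟩ : P) = x :=
        Subtype.ext (Real.exp_log x.2)
      rw [h]
      exact Subgroup.subset_closure hx
    exact ⟨⟨Real.exp y, Real.exp_pos y⟩, h2 hy, by simp [logP_def, Real.log_exp]⟩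

lemma dense_subgroup_iff (s : Set P) :
    Dense ((Subgroup.closure s : Subgroup P) : Set P) ↔
      Dense ((AddSubgroup.closure (logP '' s) : AddSubgroup ℝ) : Set ℝ) := by
  rw [← logP_image_closure]
  exact (logHomeo.isDenseEmbedding.dense_image).symm

/-- ℤ-linear independence of two reals. -/
def Indep (x y : ℝ) : Prop := ∀ m n : ℤ, (m : ℝ) * x + n * y = 0 → m = 0 ∧ n = 0

lemma Indep.symm {x y : ℝ} (h : Indep x y) : Indep y x := by
  intro m n hmn
  obtain ⟨h1, h2⟩ := h n m (by linarith)
  exact ⟨h2, h1⟩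

lemma Indep.left_ne {x y : ℝ} (h : Indep x y) : x ≠ 0 := by
  intro hx
  have := (h 1 0 (by simp [hx])).1
  norm_num at this

lemma dep_elim {x y : ℝ} (h : ¬ Indep x y) :
    ∃ m n : ℤ, (m : ℝ) * x + n * y = 0 ∧ ¬(m = 0 ∧ n = 0) := by
  rcases not_forall.1 h with ⟨m, hm⟩
  rcases not_forall.1 hm with ⟨n, hn⟩
  rcases Classical.not_imp.1 hn with ⟨he, hne⟩
  exact ⟨m, n, he, hne⟩

lemma dep_symm {x y : ℝ} (h : ¬ Indep x y) : ¬ Indep y x := fun hi => h hi.symm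

lemma indep_resolve {x y z : ℝ} (hxy : Indep x y) (hxz : ¬ Indep x z) (hyz : ¬ Indep y z) :
    z = 0 := by
  by_contra hz
  obtain ⟨m, n, e1, ne1⟩ := dep_elim hxz
  obtain ⟨p, q, e2, ne2⟩ := dep_elim hyz
  have hm : m ≠ 0 := by
    rintro rfl
    simp only [Int.cast_zero, zero_mul, zero_add] at e1
    rcases mul_eq_zero.1 e1 with h | h
    · exact ne1 ⟨rfl, by exact_mod_cast h⟩
    · exact hz h
  have hp : p ≠ 0 := by
    rintro rfl
    simp only [Int.cast_zero, zero_mul, zero_add] at e2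
    rcases mul_eq_zero.1 e2 with h | h
    · exact ne2 ⟨rfl, by exact_mod_cast h⟩
    · exact hz h
  have key : ((q * m : ℤ) : ℝ) * x + ((-(n * p) : ℤ) : ℝ) * y = 0 := by
    push_cast
    linear_combination (q : ℝ) * e1 - (n : ℝ) * e2
  obtain ⟨h1, h2⟩ := hxy _ _ key
  have hq : q = 0 := by
    rcases mul_eq_zero.1 h1 with h | h
    · exact h
    · exact absurd h hm
  have hn : n = 0 := by
    have := neg_eq_zero.1 h2
    rcases mul_eq_zero.1 this with h | h
    · exact h
    · exact absurd h hp
  have hx : x = 0 := by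
    rw [hn] at e1
    simp only [Int.cast_zero, zero_mul, add_zero] at e1
    rcases mul_eq_zero.1 e1 with h | h
    · exact absurd (by exact_mod_cast h : m = 0) hm
    · exact h
  exact hxy.left_ne hx

lemma dep_sub {x y z : ℝ} (h1 : ¬ Indep x y) (h2 : ¬ Indep x z) : ¬ Indep x (y - z) := by
  intro hind
  obtain ⟨m, n, e1, ne1⟩ := dep_elim h1
  obtain ⟨p, q, e2, ne2⟩ := dep_elim h2
  by_cases hn : n = 0
  · have hm : m ≠ 0 := fun h => ne1 ⟨h, hn⟩
    rw [hn] at e1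
    simp only [Int.cast_zero, zero_mul, add_zero] at e1
    rcases mul_eq_zero.1 e1 with h | h
    · exact hm (by exact_mod_cast h)
    · exact hind.left_ne h
  · by_cases hq : q = 0
    · have hp : p ≠ 0 := fun h => ne2 ⟨h, hq⟩
      rw [hq] at e2
      simp only [Int.cast_zero, zero_mul, add_zero] at e2
      rcases mul_eq_zero.1 e2 with h | h
      · exact hp (by exact_mod_cast h)
      · exact hind.left_ne h
    · have key : ((q * m - n * p : ℤ) : ℝ) * x + ((n * q : ℤ) : ℝ) * (y - z) = 0 := by
        push_cast
        linear_combination (q : ℝ) * e1 - (n : ℝ) * e2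
      obtain ⟨_, h2'⟩ := hind _ _ key
      exact (mul_ne_zero hn hq) h2'

lemma dense_closure_pair {x y : ℝ} (h : Indep x y) :
    Dense ((AddSubgroup.closure {x, y} : AddSubgroup ℝ) : Set ℝ) := by
  rcases AddSubgroup.dense_or_cyclic (AddSubgroup.closure {x, y}) with hd | ⟨a, ha⟩
  · exact hd
  · exfalso
    have hx : x ∈ AddSubgroup.closure ({x, y} : Set ℝ) :=
      AddSubgroup.subset_closure (by simp)
    have hy : y ∈ AddSubgroup.closure ({x, y} : Set ℝ) :=
      AddSubgroup.subset_closure (by simp)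
    rw [ha, AddSubgroup.mem_closure_singleton] at hx hy
    obtain ⟨m, hm⟩ := hx
    obtain ⟨n, hn⟩ := hy
    have key : ((n : ℤ) : ℝ) * x + ((-m : ℤ) : ℝ) * y = 0 := by
      rw [← hm, ← hn]
      push_cast [zsmul_eq_mul]
      ring
    obtain ⟨h1, h2⟩ := h _ _ key
    have hm0 : m = 0 := by omega
    have : x = 0 := by rw [← hm, hm0]; simp
    exact h.left_ne this

lemma not_dense_zmultiples (r : ℝ) :
    ¬ Dense ((AddSubgroup.zmultiples r : AddSubgroup ℝ) : Set ℝ) := by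
  intro h
  rw [Metric.dense_iff] at h
  by_cases hr : r = 0
  · obtain ⟨y, hy1, hy2⟩ := h 1 (1/2) (by norm_num)
    obtain ⟨k, hk⟩ := AddSubgroup.mem_zmultiples_iff.1 hy2
    rw [hr] at hk
    simp only [smul_zero] at hk
    rw [← hk] at hy1
    rw [Metric.mem_ball, Real.dist_eq] at hy1
    norm_num at hy1
  · obtain ⟨y, hy1, hy2⟩ := h (r/2) (|r|/2) (by positivity)
    obtain ⟨k, hk⟩ := AddSubgroup.mem_zmultiples_iff.1 hy2
    rw [← hk] at hy1
    rw [Metric.mem_ball, Real.dist_eq, zsmul_eq_mul] at hy1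
    have hfac : (k : ℝ) * r - r / 2 = r * ((k : ℝ) - 1/2) := by ring
    rw [hfac, abs_mul] at hy1
    have hrpos : 0 < |r| := abs_pos.2 hr
    have h2 : |(k : ℝ) - 1/2| < 1/2 := by
      by_contra hc
      push_neg at hc
      nlinarith
    rw [abs_lt] at h2
    have hk0 : (0 : ℝ) < (k : ℝ) := by linarith
    have hk1 : (k : ℝ) < 1 := by linarith
    have : (0 : ℤ) < k := by exact_mod_cast hk0
    have : k < 1 := by exact_mod_cast hk1
    omega

lemma dep_rat {x y : ℝ} (hx : x ≠ 0) (h : ¬ Indep x y) :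
    ∃ m n : ℤ, n ≠ 0 ∧ (n : ℝ) * y = m * x := by
  obtain ⟨m, n, e, ne⟩ := dep_elim h
  by_cases hn : n = 0
  · exfalso
    have hm : m ≠ 0 := fun hh => ne ⟨hh, hn⟩
    rw [hn] at e
    simp only [Int.cast_zero, zero_mul, add_zero] at e
    rcases mul_eq_zero.1 e with hh | hh
    · exact hm (by exact_mod_cast hh)
    · exact hx hh
  · exact ⟨-m, n, hn, by push_cast; linarith⟩

lemma mem_zm {p : ℝ} {N : ℤ} (k : ℤ) {x : ℝ} (h : (N : ℝ) * x = k * p) (hN : N ≠ 0) :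
    x ∈ AddSubgroup.zmultiples (p / N) := by
  have hN' : (N : ℝ) ≠ 0 := Int.cast_ne_zero.2 hN
  refine AddSubgroup.mem_zmultiples_iff.2 ⟨k, ?_⟩
  rw [zsmul_eq_mul]
  field_simp
  linear_combination -h

lemma commens4 (a b c d : ℝ) (hab : ¬ Indep a b) (hac : ¬ Indep a c) (had : ¬ Indep a d)
    (hbc : ¬ Indep b c) (hbd : ¬ Indep b d) (hcd : ¬ Indep c d) :
    ∃ r : ℝ, a ∈ AddSubgroup.zmultiples r ∧ b ∈ AddSubgroup.zmultiples r ∧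
      c ∈ AddSubgroup.zmultiples r ∧ d ∈ AddSubgroup.zmultiples r := by
  by_cases ha : a = 0
  · by_cases hb : b = 0
    · by_cases hc : c = 0
      · by_cases hd : d = 0
        · exact ⟨0, by rw [ha]; exact AddSubgroup.zero_mem _,
            by rw [hb]; exact AddSubgroup.zero_mem _,
            by rw [hc]; exact AddSubgroup.zero_mem _,
            by rw [hd]; exact AddSubgroup.zero_mem _⟩
        · exact ⟨d, by rw [ha]; exact AddSubgroup.zero_mem _,
            by rw [hb]; exact AddSubgroup.zero_mem _,
            by rw [hc]; exact AddSubgroup.zero_mem _,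
            AddSubgroup.mem_zmultiples_iff.2 ⟨1, one_zsmul d⟩⟩
      · obtain ⟨md, nd, hnd, hd⟩ := dep_rat hc hcd
        refine ⟨c / nd, by rw [ha]; exact AddSubgroup.zero_mem _,
          by rw [hb]; exact AddSubgroup.zero_mem _,
          mem_zm nd (by ring) hnd, mem_zm md hd hnd⟩
    · obtain ⟨mc, nc, hnc, hc⟩ := dep_rat hb hbc
      obtain ⟨md, nd, hnd, hd⟩ := dep_rat hb hbd
      have hN : nc * nd ≠ 0 := mul_ne_zero hnc hnd
      refine ⟨b / ((nc * nd : ℤ) : ℝ), by rw [ha]; exact AddSubgroup.zero_mem _,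
        mem_zm (nc * nd) (by push_cast; ring) hN,
        mem_zm (mc * nd) (by push_cast; linear_combination (nd : ℝ) * hc) hN,
        mem_zm (md * nc) (by push_cast; linear_combination (nc : ℝ) * hd) hN⟩
  · obtain ⟨mb, nb, hnb, hb⟩ := dep_rat ha hab
    obtain ⟨mc, nc, hnc, hc⟩ := dep_rat ha hac
    obtain ⟨md, nd, hnd, hd⟩ := dep_rat ha had
    have hN : nb * nc * nd ≠ 0 := mul_ne_zero (mul_ne_zero hnb hnc) hnd
    refine ⟨a / ((nb * nc * nd : ℤ) : ℝ),
      mem_zm (nb * nc * nd) (by push_cast; ring) hN,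
      mem_zm (mb * nc * nd) (by push_cast; linear_combination ((nc : ℝ) * nd) * hb) hN,
      mem_zm (mc * nb * nd) (by push_cast; linear_combination ((nb : ℝ) * nd) * hc) hN,
      mem_zm (md * nb * nc) (by push_cast; linear_combination ((nb : ℝ) * nc) * hd) hN⟩

lemma crr3_pos (M : Matrix (Fin 3) (Fin 3) ℝ) (hpos : ∀ i j, 0 < M i j)
    (i₁ i₂ j₁ j₂ : Fin 3) : 0 < crr3 M i₁ i₂ j₁ j₂ :=
  div_pos (mul_pos (hpos _ _) (hpos _ _)) (mul_pos (hpos _ _) (hpos _ _))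

lemma pair_ne_of {u v w z x : Fin 3} (h1 : x = u ∨ x = v) (h2 : ¬(x = w ∨ x = z)) :
    ({u, v} : Set (Fin 3)) ≠ {w, z} := by
  intro h
  have hx : x ∈ ({u, v} : Set (Fin 3)) := by
    rcases h1 with rfl | rfl
    · exact Set.mem_insert _ _
    · exact Set.mem_insert_of_mem _ rfl
  rw [h] at hx
  exact h2 (by simpa [Set.mem_insert_iff] using hx)

/-- Finishing lemma: given indices with independent log-cross-ratios, the corresponding
closure is dense. -/
lemma finish (M : Matrix (Fin 3) (Fin 3) ℝ) (hpos : ∀ i j, 0 < M i j)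
    (i₁ i₂ j₁ j₂ i₁' i₂' j₁' j₂' : Fin 3)
    (h : Indep (Real.log (crr3 M i₁ i₂ j₁ j₂)) (Real.log (crr3 M i₁' i₂' j₁' j₂'))) :
    Dense ((Subgroup.closure {x : {x : ℝ // 0 < x} |
        (x : ℝ) = crr3 M i₁ i₂ j₁ j₂ ∨ (x : ℝ) = crr3 M i₁' i₂' j₁' j₂'} :
      Subgroup {x : ℝ // 0 < x}) : Set {x : ℝ // 0 < x}) := by
  have hX : 0 < crr3 M i₁ i₂ j₁ j₂ := crr3_pos M hpos _ _ _ _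
  have hY : 0 < crr3 M i₁' i₂' j₁' j₂' := crr3_pos M hpos _ _ _ _
  rw [dense_subgroup_iff]
  have himg : logP '' {x : P | (x : ℝ) = crr3 M i₁ i₂ j₁ j₂ ∨
      (x : ℝ) = crr3 M i₁' i₂' j₁' j₂'} =
      {Real.log (crr3 M i₁ i₂ j₁ j₂), Real.log (crr3 M i₁' i₂' j₁' j₂')} := by
    ext t
    simp only [Set.mem_image, Set.mem_setOf_eq, Set.mem_insert_iff, Set.mem_singleton_iff]
    constructor
    · rintro ⟨x, hx | hx, rfl⟩
      · exact Or.inl (by rw [logP_def, hx])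
      · exact Or.inr (by rw [logP_def, hx])
    · rintro (rfl | rfl)
      · exact ⟨⟨_, hX⟩, Or.inl rfl, rfl⟩
      · exact ⟨⟨_, hY⟩, Or.inr rfl, rfl⟩
  rw [himg]
  exact dense_closure_pair h

end CRGAux

open CRGAux in
/-- A rank-3 positive 3×3 matrix with dense cross-ratio group has two 2×2 submatrices,
neither in the same two rows nor in the same two columns, whose cross-ratios generate a
dense subgroup of ℝ>0. -/
theorem exists_good_submatrices (M : Matrix (Fin 3) (Fin 3) ℝ)
    (hrank : M.rank = 3) (hpos : ∀ i j, 0 < M i j)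
    (hdense : Dense ((CRG M : Subgroup {x : ℝ // 0 < x}) : Set {x : ℝ // 0 < x})) :
    ∃ i₁ i₂ j₁ j₂ i₁' i₂' j₁' j₂' : Fin 3,
      i₁ ≠ i₂ ∧ j₁ ≠ j₂ ∧ i₁' ≠ i₂' ∧ j₁' ≠ j₂' ∧
      ({i₁, i₂} : Set (Fin 3)) ≠ {i₁', i₂'} ∧
      ({j₁, j₂} : Set (Fin 3)) ≠ {j₁', j₂'} ∧
      Dense ((Subgroup.closure {x : {x : ℝ // 0 < x} |
          (x : ℝ) = crr3 M i₁ i₂ j₁ j₂ ∨ (x : ℝ) = crr3 M i₁' i₂' j₁' j₂'} :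
        Subgroup {x : ℝ // 0 < x}) : Set {x : ℝ // 0 < x}) := by
  -- log of a cross-ratio
  have hlog : ∀ i₁ i₂ j₁ j₂ : Fin 3, Real.log (crr3 M i₁ i₂ j₁ j₂) =
      Real.log (M i₁ j₁) + Real.log (M i₂ j₂) - Real.log (M i₁ j₂) - Real.log (M i₂ j₁) := by
    intro i₁ i₂ j₁ j₂
    unfold crr3
    rw [Real.log_div (mul_pos (hpos _ _) (hpos _ _)).ne' (mul_pos (hpos _ _) (hpos _ _)).ne',
      Real.log_mul (hpos _ _).ne' (hpos _ _).ne', Real.log_mul (hpos _ _).ne' (hpos _ _).ne']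
    ring
  set a := Real.log (crr3 M 0 1 0 1) with ha
  set b := Real.log (crr3 M 0 1 1 2) with hb
  set c := Real.log (crr3 M 1 2 0 1) with hc
  set d := Real.log (crr3 M 1 2 1 2) with hd
  have hab' : Real.log (crr3 M 0 1 0 2) = a + b := by
    rw [ha, hb, hlog, hlog, hlog]; ring
  have hcd' : Real.log (crr3 M 1 2 0 2) = c + d := by
    rw [hc, hd, hlog, hlog, hlog]; ring
  have hbd' : Real.log (crr3 M 0 2 1 2) = b + d := by
    rw [hb, hd, hlog, hlog, hlog]; ring
  by_cases had : Indep a d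
  · exact ⟨0, 1, 0, 1, 1, 2, 1, 2, by decide, by decide, by decide, by decide,
      pair_ne_of (x := 0) (Or.inl rfl) (by decide),
      pair_ne_of (x := 0) (Or.inl rfl) (by decide),
      finish M hpos _ _ _ _ _ _ _ _ had⟩
  by_cases hbc : Indep b c
  · exact ⟨0, 1, 1, 2, 1, 2, 0, 1, by decide, by decide, by decide, by decide,
      pair_ne_of (x := 0) (Or.inl rfl) (by decide),
      pair_ne_of (x := 2) (Or.inr rfl) (by decide),
      finish M hpos _ _ _ _ _ _ _ _ hbc⟩
  by_cases hab : Indep a b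
  · by_cases hd0 : d = 0
    · -- use (rows 0 1, cols 0 1) and (rows 0 2, cols 1 2): Indep a (b+d)
      have key : Indep (Real.log (crr3 M 0 1 0 1)) (Real.log (crr3 M 0 2 1 2)) := by
        rw [← ha, hbd', hd0, add_zero]
        exact hab
      exact ⟨0, 1, 0, 1, 0, 2, 1, 2, by decide, by decide, by decide, by decide,
        pair_ne_of (x := 1) (Or.inr rfl) (by decide),
        pair_ne_of (x := 0) (Or.inl rfl) (by decide),
        finish M hpos _ _ _ _ _ _ _ _ key⟩
    · -- d ≠ 0; then Indep b d, hence Indep b (c+d)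
      have hbd : Indep b d := by
        by_contra hcon
        exact hd0 (indep_resolve hab had hcon)
      have hbcd : Indep b (c + d) := by
        by_contra hcon
        have := dep_sub hcon hbc
        have he : c + d - c = d := by ring
        rw [he] at this
        exact this hbd
      have key : Indep (Real.log (crr3 M 0 1 1 2)) (Real.log (crr3 M 1 2 0 2)) := by
        rw [← hb, hcd']
        exact hbcd
      exact ⟨0, 1, 1, 2, 1, 2, 0, 2, by decide, by decide, by decide, by decide,
        pair_ne_of (x := 0) (Or.inl rfl) (by decide),
        pair_ne_of (x := 1) (Or.inl rfl) (by decide),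
        finish M hpos _ _ _ _ _ _ _ _ key⟩
  by_cases hcd : Indep c d
  · by_cases hb0 : b = 0
    · -- use (rows 1 2, cols 0 1) and (rows 0 2, cols 1 2): Indep c (b+d)
      have key : Indep (Real.log (crr3 M 1 2 0 1)) (Real.log (crr3 M 0 2 1 2)) := by
        rw [← hc, hbd', hb0, zero_add]
        exact hcd
      exact ⟨1, 2, 0, 1, 0, 2, 1, 2, by decide, by decide, by decide, by decide,
        pair_ne_of (x := 1) (Or.inl rfl) (by decide),
        pair_ne_of (x := 0) (Or.inl rfl) (by decide),
        finish M hpos _ _ _ _ _ _ _ _ key⟩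
    · -- b ≠ 0; then Indep d b, hence Indep d (a+b)
      have hdb : Indep d b := by
        by_contra hcon
        exact hb0 (indep_resolve hcd (dep_symm hbc) hcon)
      have hdab : Indep d (a + b) := by
        by_contra hcon
        have := dep_sub hcon (dep_symm had)
        have he : a + b - a = b := by ring
        rw [he] at this
        exact this hdb
      have key : Indep (Real.log (crr3 M 1 2 1 2)) (Real.log (crr3 M 0 1 0 2)) := by
        rw [← hd, hab']
        exact hdab
      exact ⟨1, 2, 1, 2, 0, 1, 0, 2, by decide, by decide, by decide, by decide,
        pair_ne_of (x := 2) (Or.inr rfl) (by decide),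
        pair_ne_of (x := 1) (Or.inl rfl) (by decide),
        finish M hpos _ _ _ _ _ _ _ _ key⟩
  by_cases hac : Indep a c
  · -- then d = 0, use Indep a (c+d)
    have hd0 : d = 0 := indep_resolve hac had hcd
    have key : Indep (Real.log (crr3 M 0 1 0 1)) (Real.log (crr3 M 1 2 0 2)) := by
      rw [← ha, hcd', hd0, add_zero]
      exact hac
    exact ⟨0, 1, 0, 1, 1, 2, 0, 2, by decide, by decide, by decide, by decide,
      pair_ne_of (x := 0) (Or.inl rfl) (by decide),
      pair_ne_of (x := 1) (Or.inr rfl) (by decide),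
      finish M hpos _ _ _ _ _ _ _ _ key⟩
  by_cases hbd : Indep b d
  · -- then c = 0, use Indep b (c+d)
    have hc0 : c = 0 := indep_resolve hbd hbc (dep_symm hcd)
    have key : Indep (Real.log (crr3 M 0 1 1 2)) (Real.log (crr3 M 1 2 0 2)) := by
      rw [← hb, hcd', hc0, zero_add]
      exact hbd
    exact ⟨0, 1, 1, 2, 1, 2, 0, 2, by decide, by decide, by decide, by decide,
      pair_ne_of (x := 0) (Or.inl rfl) (by decide),
      pair_ne_of (x := 1) (Or.inl rfl) (by decide),
      finish M hpos _ _ _ _ _ _ _ _ key⟩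
  -- all six pairs dependent: contradiction with density
  exfalso
  obtain ⟨r, hra, hrb, hrc, hrd⟩ := commens4 a b c d hab hac had hbc hbd hcd
  set S := AddSubgroup.zmultiples r with hS
  set D : Fin 3 → Fin 3 → ℝ := fun i j =>
    Real.log (M i j) - Real.log (M i 0) - Real.log (M 0 j) + Real.log (M 0 0) with hDdef
  have hfin : ∀ k : Fin 3, k = 0 ∨ k = 1 ∨ k = 2 := by decide
  have hD : ∀ i j : Fin 3, D i j ∈ S := by
    intro i j
    rcases hfin i with rfl | rfl | rfl <;> rcases hfin j with rfl | rfl | rfl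
    · rw [show D 0 0 = 0 by simp only [hDdef]; ring]; exact S.zero_mem
    · rw [show D 0 1 = 0 by simp only [hDdef]; ring]; exact S.zero_mem
    · rw [show D 0 2 = 0 by simp only [hDdef]; ring]; exact S.zero_mem
    · rw [show D 1 0 = 0 by simp only [hDdef]; ring]; exact S.zero_mem
    · rw [show D 1 1 = a by simp only [hDdef]; rw [ha, hlog]; ring]; exact hra
    · rw [show D 1 2 = a + b by simp only [hDdef]; rw [ha, hb, hlog, hlog]; ring]
      exact S.add_mem hra hrb
    · rw [show D 2 0 = 0 by simp only [hDdef]; ring]; exact S.zero_mem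
    · rw [show D 2 1 = a + c by simp only [hDdef]; rw [ha, hc, hlog, hlog]; ring]
      exact S.add_mem hra hrc
    · rw [show D 2 2 = a + b + c + d by
        simp only [hDdef]; rw [ha, hb, hc, hd, hlog, hlog, hlog, hlog]; ring]
      exact S.add_mem (S.add_mem (S.add_mem hra hrb) hrc) hrd
  have key : ∀ i₁ i₂ j₁ j₂ : Fin 3, Real.log (crr3 M i₁ i₂ j₁ j₂) ∈ S := by
    intro i₁ i₂ j₁ j₂
    rw [hlog]
    have he : Real.log (M i₁ j₁) + Real.log (M i₂ j₂) - Real.log (M i₁ j₂)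
        - Real.log (M i₂ j₁) = D i₁ j₁ + D i₂ j₂ - D i₁ j₂ - D i₂ j₁ := by
      simp only [hDdef]; ring
    rw [he]
    exact S.sub_mem (S.sub_mem (S.add_mem (hD _ _) (hD _ _)) (hD _ _)) (hD _ _)
  have hdense' : Dense ((AddSubgroup.closure (logP ''
      {x : {x : ℝ // 0 < x} | ∃ i₁ i₂ j₁ j₂ : Fin 3,
        i₁ ≠ i₂ ∧ j₁ ≠ j₂ ∧ (x : ℝ) = crr3 M i₁ i₂ j₁ j₂}) : AddSubgroup ℝ) : Set ℝ) :=
    (dense_subgroup_iff _).1 hdense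
  have hsub : AddSubgroup.closure (logP ''
      {x : {x : ℝ // 0 < x} | ∃ i₁ i₂ j₁ j₂ : Fin 3,
        i₁ ≠ i₂ ∧ j₁ ≠ j₂ ∧ (x : ℝ) = crr3 M i₁ i₂ j₁ j₂}) ≤ S := by
    apply (AddSubgroup.closure_le _).2
    rintro _ ⟨x, ⟨i₁, i₂, j₁, j₂, _, _, hx⟩, rfl⟩
    show logP x ∈ (S : Set ℝ)
    rw [logP_def, hx]
    exact key _ _ _ _
  exact not_dense_zmultiples r (Dense.mono hsub hdense')
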